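/- If u ∈ S_n is a product of a transposition and a disjoint cycle of even length, then there exists h ∈ S_n with h^3 = 1 and (uh)^3 = 1. -/

import Mathlib

open Equiv List

namespace Stmt7Aux

variable {α : Type*} [DecidableEq α]

lemma cube_eq_one (p : Equiv.Perm α) (a b c : α) (h1 : p a = b) (h2 : p b = c)
    (h3 : p c = a) (h4 : ∀ x, x ≠ a → x ≠ b → x ≠ c → p x = x) : p ^ 3 = 1 := by
  ext x
  have hp3 : (p ^ 3) x = p (p (p x)) := by
    simp [pow_succ, Equiv.Perm.mul_apply]
  rw [hp3, Equiv.Perm.one_apply]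
  by_cases ha : x = a
  · subst ha; rw [h1, h2, h3]
  by_cases hb : x = b
  · subst hb; rw [h2, h3, h1]
  by_cases hc : x = c
  · subst hc; rw [h3, h1, h2]
  · rw [h4 x ha hb hc, h4 x ha hb hc, h4 x ha hb hc]

lemma sw3_a (x y z : α) (hzx : z ≠ x) (hzy : z ≠ y) :
    (Equiv.swap x y * Equiv.swap x z) x = z := by
  rw [Equiv.Perm.mul_apply, Equiv.swap_apply_left, Equiv.swap_apply_of_ne_of_ne hzx hzy]

lemma sw3_b (x y z : α) : (Equiv.swap x y * Equiv.swap x z) z = y := by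
  rw [Equiv.Perm.mul_apply, Equiv.swap_apply_right, Equiv.swap_apply_left]

lemma sw3_c (x y z : α) (hyx : y ≠ x) (hyz : y ≠ z) :
    (Equiv.swap x y * Equiv.swap x z) y = x := by
  rw [Equiv.Perm.mul_apply, Equiv.swap_apply_of_ne_of_ne hyx hyz, Equiv.swap_apply_right]

lemma sw3_fix (x y z w : α) (hwx : w ≠ x) (hwy : w ≠ y) (hwz : w ≠ z) :
    (Equiv.swap x y * Equiv.swap x z) w = w := by
  rw [Equiv.Perm.mul_apply, Equiv.swap_apply_of_ne_of_ne hwx hwz,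
    Equiv.swap_apply_of_ne_of_ne hwx hwy]

lemma sw3_cube (x y z : α) (hxy : x ≠ y) (hxz : x ≠ z) (hyz : y ≠ z) :
    (Equiv.swap x y * Equiv.swap x z) ^ 3 = 1 :=
  cube_eq_one _ x z y (sw3_a x y z (Ne.symm hxz) (Ne.symm hyz))
    (sw3_b x y z) (sw3_c x y z (Ne.symm hxy) hyz)
    (fun w h1 h2 h3 => sw3_fix x y z w h1 h3 h2)

lemma cube3 (x y z : α) (hxy : x ≠ y) (hxz : x ≠ z) (hyz : y ≠ z) :
    (Equiv.swap x y * Equiv.swap y z) ^ 3 = 1 := by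
  apply cube_eq_one _ x y z
  · rw [Equiv.Perm.mul_apply, Equiv.swap_apply_of_ne_of_ne hxy hxz, Equiv.swap_apply_left]
  · rw [Equiv.Perm.mul_apply, Equiv.swap_apply_left,
      Equiv.swap_apply_of_ne_of_ne (Ne.symm hxz) (Ne.symm hyz)]
  · rw [Equiv.Perm.mul_apply, Equiv.swap_apply_right, Equiv.swap_apply_right]
  · intro w h1 h2 h3
    rw [Equiv.Perm.mul_apply, Equiv.swap_apply_of_ne_of_ne h2 h3,
      Equiv.swap_apply_of_ne_of_ne h1 h2]

lemma mul_cube (p q : Equiv.Perm α) (hd : ∀ x, p x = x ∨ q x = x)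
    (hp : p ^ 3 = 1) (hq : q ^ 3 = 1) : (p * q) ^ 3 = 1 := by
  have hc : Commute p q := Equiv.Perm.Disjoint.commute hd
  rw [hc.mul_pow, hp, hq, one_mul]

lemma ne_of_idx (l : List α) (hn : l.Nodup) {i j : ℕ} (hi : i < l.length)
    (hj : j < l.length) (h : i ≠ j) : l[i]'hi ≠ l[j]'hj :=
  fun e => h (hn.getElem_inj_iff.mp e)

lemma getElem_idx_eq (l : List α) {i j : ℕ} (hi : i < l.length) (h : i = j) :
    l[i]'hi = l[j]'(h ▸ hi) := by subst h; rfl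

lemma dropElemN (l : List α) (n j : ℕ) (hj : n + j < l.length) :
    (l.drop n)[j]'(by rw [List.length_drop]; omega) = l[n+j]'hj := by
  rw [List.getElem_drop]

lemma moves_mem (l : List α) (x : α) (h : l.formPerm x ≠ x) : x ∈ l := by
  by_contra h'; exact h (List.formPerm_apply_of_notMem h')

lemma formPerm_ne_self (l : List α) (hn : l.Nodup) (h2 : 2 ≤ l.length)
    {i : ℕ} (hi : i < l.length) : l.formPerm (l[i]'hi) ≠ l[i]'hi := by
  rw [List.formPerm_apply_getElem _ hn i hi]
  intro h
  have hmod := hn.getElem_inj_iff.mp h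
  rcases Nat.lt_or_ge (i+1) l.length with hlt | hge
  · rw [Nat.mod_eq_of_lt hlt] at hmod; omega
  · have : i + 1 = l.length := by omega
    rw [this, Nat.mod_self] at hmod; omega

lemma not_mem_drop4 (l : List α) (hn : l.Nodup) {i : ℕ} (hi : i < l.length) (h4 : i < 4) :
    l[i]'hi ∉ l.drop 4 := by
  intro hmem
  obtain ⟨j, hj, hEq⟩ := List.mem_iff_getElem.mp hmem
  rw [List.length_drop] at hj
  rw [dropElemN l 4 j (by omega)] at hEq
  have := hn.getElem_inj_iff.mp hEq
  omega

lemma peel (l : List α) (hn : l.Nodup) (hL : 5 ≤ l.length) :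
    l.formPerm * (Equiv.swap (l[2]'(by omega)) (l[3]'(by omega)) *
      Equiv.swap (l[2]'(by omega)) (l[l.length-1]'(by omega))) =
    (Equiv.swap (l[0]'(by omega)) (l[2]'(by omega)) *
      Equiv.swap (l[0]'(by omega)) (l[1]'(by omega))) * (l.drop 4).formPerm := by
  have hdn : (l.drop 4).Nodup := hn.sublist (List.drop_sublist 4 l)
  suffices h : ∀ x, l.formPerm ((Equiv.swap (l[2]'(by omega)) (l[3]'(by omega)) *
      Equiv.swap (l[2]'(by omega)) (l[l.length-1]'(by omega))) x) =
      (Equiv.swap (l[0]'(by omega)) (l[2]'(by omega)) *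
      Equiv.swap (l[0]'(by omega)) (l[1]'(by omega))) ((l.drop 4).formPerm x) by
    ext x; exact h x
  intro x
  by_cases hx : x ∈ l
  · obtain ⟨i, hi, rfl⟩ := List.mem_iff_getElem.mp hx
    by_cases hi0 : i = 0
    · subst hi0
      rw [sw3_fix _ _ _ _ (ne_of_idx l hn _ _ (by omega)) (ne_of_idx l hn _ _ (by omega))
          (ne_of_idx l hn _ _ (by omega)),
        List.formPerm_apply_lt_getElem l hn 0 (by omega),
        List.formPerm_apply_of_notMem (not_mem_drop4 l hn _ (by omega)),
        sw3_a _ _ _ (ne_of_idx l hn _ _ (by omega)) (ne_of_idx l hn _ _ (by omega))]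
    by_cases hi1 : i = 1
    · subst hi1
      rw [sw3_fix _ _ _ _ (ne_of_idx l hn _ _ (by omega)) (ne_of_idx l hn _ _ (by omega))
          (ne_of_idx l hn _ _ (by omega)),
        List.formPerm_apply_lt_getElem l hn 1 (by omega),
        List.formPerm_apply_of_notMem (not_mem_drop4 l hn _ (by omega)), sw3_b]
    by_cases hi2 : i = 2
    · subst hi2
      rw [sw3_a _ _ _ (ne_of_idx l hn _ _ (by omega)) (ne_of_idx l hn _ _ (by omega)),
        List.formPerm_apply_getElem _ hn _ (by omega),
        getElem_idx_eq l _ (show (l.length - 1 + 1) % l.length = 0 by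
          rw [Nat.sub_add_cancel (by omega : 1 ≤ l.length)]; exact Nat.mod_self _),
        List.formPerm_apply_of_notMem (not_mem_drop4 l hn _ (by omega)),
        sw3_c _ _ _ (ne_of_idx l hn _ _ (by omega)) (ne_of_idx l hn _ _ (by omega))]
    by_cases hi3 : i = 3
    · subst hi3
      rw [sw3_c _ _ _ (ne_of_idx l hn _ _ (by omega)) (ne_of_idx l hn _ _ (by omega)),
        List.formPerm_apply_lt_getElem l hn 2 (by omega),
        List.formPerm_apply_of_notMem (not_mem_drop4 l hn _ (by omega)),
        sw3_fix _ _ _ _ (ne_of_idx l hn _ _ (by omega)) (ne_of_idx l hn _ _ (by omega))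
          (ne_of_idx l hn _ _ (by omega))]
    by_cases hiL : i = l.length - 1
    · subst hiL
      rw [sw3_b, List.formPerm_apply_lt_getElem l hn 3 (by omega)]
      have e1 : l[l.length-1]'(by omega) =
          (l.drop 4)[l.length-5]'(by rw [List.length_drop]; omega) :=
        ((dropElemN l 4 (l.length-5) (by omega)).trans (getElem_idx_eq l _ (by omega))).symm
      rw [e1, List.formPerm_apply_getElem _ hdn _ (by rw [List.length_drop]; omega)]
      have e2 : (l.drop 4)[(l.length - 5 + 1) % (l.drop 4).length]'(by
            apply Nat.mod_lt; rw [List.length_drop]; omega) =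
          (l.drop 4)[0]'(by rw [List.length_drop]; omega) := by
        apply getElem_idx_eq
        rw [List.length_drop, show l.length - 5 + 1 = l.length - 4 by omega]
        exact Nat.mod_self _
      rw [e2, dropElemN l 4 0 (by omega),
        sw3_fix _ _ _ _ (ne_of_idx l hn _ _ (by omega)) (ne_of_idx l hn _ _ (by omega))
          (ne_of_idx l hn _ _ (by omega))]
    · have h4i : 4 ≤ i := by omega
      rw [sw3_fix _ _ _ _ (ne_of_idx l hn _ _ (by omega)) (ne_of_idx l hn _ _ (by omega))
          (ne_of_idx l hn _ _ (by omega)),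
        List.formPerm_apply_lt_getElem l hn i (by omega)]
      have e1 : l[i]'hi = (l.drop 4)[i-4]'(by rw [List.length_drop]; omega) :=
        ((dropElemN l 4 (i-4) (by omega)).trans (getElem_idx_eq l _ (by omega))).symm
      rw [e1, List.formPerm_apply_getElem _ hdn _ (by rw [List.length_drop]; omega)]
      have e2 : (l.drop 4)[(i - 4 + 1) % (l.drop 4).length]'(by
            apply Nat.mod_lt; rw [List.length_drop]; omega) =
          (l.drop 4)[i-3]'(by rw [List.length_drop]; omega) := by
        apply getElem_idx_eq
        rw [List.length_drop]
        rw [Nat.mod_eq_of_lt (by omega)]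
        omega
      rw [e2, dropElemN l 4 (i-3) (by omega),
        sw3_fix _ _ _ _ (ne_of_idx l hn _ _ (by omega)) (ne_of_idx l hn _ _ (by omega))
          (ne_of_idx l hn _ _ (by omega))]
      exact getElem_idx_eq l _ (by omega)
  · have hx2 : x ≠ l[2]'(by omega) := fun e => hx (e ▸ List.getElem_mem _)
    have hx3 : x ≠ l[3]'(by omega) := fun e => hx (e ▸ List.getElem_mem _)
    have hxL : x ≠ l[l.length-1]'(by omega) := fun e => hx (e ▸ List.getElem_mem _)
    have hx0 : x ≠ l[0]'(by omega) := fun e => hx (e ▸ List.getElem_mem _)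
    have hx1 : x ≠ l[1]'(by omega) := fun e => hx (e ▸ List.getElem_mem _)
    rw [sw3_fix _ _ _ _ hx2 hx3 hxL, List.formPerm_apply_of_notMem hx,
      List.formPerm_apply_of_notMem (fun hm => hx (List.drop_subset 4 l hm)),
      sw3_fix _ _ _ _ hx0 hx2 hx1]

lemma key : ∀ (L : ℕ), Odd L → ∀ (l : List α), l.Nodup → l.length = L → ∀ x₀ ∈ l,
    ∃ k : Equiv.Perm α, k ^ 3 = 1 ∧ (l.formPerm * k) ^ 3 = 1 ∧
      ∀ x, k x ≠ x → x ∈ l ∧ x ≠ x₀ := by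
  intro L
  induction L using Nat.strong_induction_on with
  | _ L IH =>
  intro hodd l hn hlen x₀ hx₀
  have hLpos : 0 < L := by rcases hodd with ⟨m, rfl⟩; omega
  obtain ⟨i0, hi0, hix⟩ := List.mem_iff_getElem.mp hx₀
  set l₁ := l.rotate i0 with hl₁
  have hn₁ : l₁.Nodup := List.nodup_rotate.mpr hn
  have hlen₁ : l₁.length = L := by rw [hl₁, List.length_rotate, hlen]
  have hfp₁ : l₁.formPerm = l.formPerm := List.formPerm_rotate l hn i0
  have hmem₁ : ∀ x : α, x ∈ l₁ ↔ x ∈ l := fun x => List.mem_rotate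
  have hhead : l₁[0]'(by omega) = x₀ := by
    rw [← hix]
    exact (List.getElem_rotate l i0 0 (by rw [List.length_rotate]; omega)).trans
      (getElem_idx_eq l _ (show (0 + i0) % l.length = i0 by
        rw [Nat.zero_add]; exact Nat.mod_eq_of_lt hi0))
  by_cases hL1 : L = 1
  · refine ⟨1, one_pow 3, ?_, by simp⟩
    obtain ⟨y, hy⟩ := List.length_eq_one_iff.mp (hlen.trans hL1)
    rw [hy, List.formPerm_singleton, mul_one, one_pow]
  by_cases hL3 : L = 3
  · refine ⟨1, one_pow 3, ?_, by simp⟩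
    obtain ⟨x, y, z, hxyz⟩ := List.length_eq_three.mp (hlen.trans hL3)
    subst hxyz
    simp only [List.nodup_cons, List.mem_cons, List.mem_singleton, not_or,
      List.nodup_nil, and_true, List.not_mem_nil, or_false] at hn
    rw [mul_one, List.formPerm_cons_cons, List.formPerm_pair]
    exact cube3 x y z hn.1.1 hn.1.2 hn.2.1
  have hL5 : 5 ≤ L := by rcases hodd with ⟨m, rfl⟩; omega
  have hdn : (l₁.drop 4).Nodup := hn₁.sublist (List.drop_sublist 4 l₁)
  have hx₁mem : l₁[l₁.length-1]'(by omega) ∈ l₁.drop 4 := by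
    rw [show l₁[l₁.length-1]'(by omega) = (l₁.drop 4)[l₁.length-5]'(by
        rw [List.length_drop]; omega) from
      ((dropElemN l₁ 4 (l₁.length-5) (by omega)).trans (getElem_idx_eq l₁ _ (by omega))).symm]
    exact List.getElem_mem _
  obtain ⟨k'', hk3'', hfk3'', hmoves''⟩ := IH (L - 4) (by omega)
    (by rcases hodd with ⟨m, rfl⟩; exact ⟨m - 2, by omega⟩) (l₁.drop 4) hdn
    (by rw [List.length_drop]; omega) (l₁[l₁.length-1]'(by omega)) hx₁mem
  set t := Equiv.swap (l₁[2]'(by omega)) (l₁[3]'(by omega)) *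
      Equiv.swap (l₁[2]'(by omega)) (l₁[l₁.length-1]'(by omega)) with ht
  set c₃ := Equiv.swap (l₁[0]'(by omega)) (l₁[2]'(by omega)) *
      Equiv.swap (l₁[0]'(by omega)) (l₁[1]'(by omega)) with hc₃
  have htcube : t ^ 3 = 1 := sw3_cube _ _ _ (ne_of_idx l₁ hn₁ _ _ (by omega))
    (ne_of_idx l₁ hn₁ _ _ (by omega)) (ne_of_idx l₁ hn₁ _ _ (by omega))
  have hdisj : ∀ x : α, t x = x ∨ k'' x = x := by
    intro x
    by_cases h : k'' x = x
    · exact Or.inr h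
    · left
      obtain ⟨hm, hne⟩ := hmoves'' x h
      obtain ⟨j, hj, rfl⟩ := List.mem_iff_getElem.mp hm
      have hj' : j < l₁.length - 4 := by rw [List.length_drop] at hj; exact hj
      rw [dropElemN l₁ 4 j (by omega)] at hne ⊢
      exact sw3_fix _ _ _ _ (ne_of_idx l₁ hn₁ _ _ (by omega))
        (ne_of_idx l₁ hn₁ _ _ (by omega)) hne
  refine ⟨t * k'', mul_cube t k'' hdisj htcube hk3'', ?_, ?_⟩
  · have assoc : l.formPerm * (t * k'') = c₃ * ((l₁.drop 4).formPerm * k'') := by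
      rw [← hfp₁, ← mul_assoc, ht, hc₃, peel l₁ hn₁ (by omega), mul_assoc]
    rw [assoc]
    refine mul_cube _ _ ?_ (sw3_cube _ _ _ (ne_of_idx l₁ hn₁ _ _ (by omega))
      (ne_of_idx l₁ hn₁ _ _ (by omega)) (ne_of_idx l₁ hn₁ _ _ (by omega))) hfk3''
    intro x
    by_cases h : ((l₁.drop 4).formPerm * k'') x = x
    · exact Or.inr h
    · left
      have hmem : x ∈ l₁.drop 4 := by
        by_cases hk : k'' x = x
        · apply moves_mem
          intro hfix
          exact h (by rw [Equiv.Perm.mul_apply, hk, hfix])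
        · exact (hmoves'' x hk).1
      obtain ⟨j, hj, rfl⟩ := List.mem_iff_getElem.mp hmem
      have hj' : j < l₁.length - 4 := by rw [List.length_drop] at hj; exact hj
      rw [dropElemN l₁ 4 j (by omega)]
      exact sw3_fix _ _ _ _ (ne_of_idx l₁ hn₁ _ _ (by omega))
        (ne_of_idx l₁ hn₁ _ _ (by omega)) (ne_of_idx l₁ hn₁ _ _ (by omega))
  · intro x hkx
    by_cases hk : k'' x = x
    · have htx : t x ≠ x := fun h => hkx (by rw [Equiv.Perm.mul_apply, hk, h])
      have hx3 : x = l₁[2]'(by omega) ∨ x = l₁[3]'(by omega) ∨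
          x = l₁[l₁.length-1]'(by omega) := by
        by_contra hcon
        push_neg at hcon
        exact htx (sw3_fix _ _ _ _ hcon.1 hcon.2.1 hcon.2.2)
      rcases hx3 with rfl | rfl | rfl <;>
        exact ⟨(hmem₁ _).mp (List.getElem_mem _),
          by rw [← hhead]; exact ne_of_idx l₁ hn₁ _ _ (by omega)⟩
    · obtain ⟨hm, _⟩ := hmoves'' x hk
      obtain ⟨j, hj, rfl⟩ := List.mem_iff_getElem.mp hm
      have hj' : j < l₁.length - 4 := by rw [List.length_drop] at hj; exact hj
      rw [dropElemN l₁ 4 j (by omega)]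
      refine ⟨(hmem₁ _).mp (List.getElem_mem _), ?_⟩
      rw [← hhead]
      exact ne_of_idx l₁ hn₁ _ _ (by omega)

lemma not_mem_l' (l : List α) (hn : l.Nodup) (hL : 4 ≤ l.length) {i : ℕ}
    (hi : i < l.length) (h1 : i = 1) :
    l[i]'hi ∉ ((l[0]'(by omega)) :: l.drop 2) := by
  subst h1
  intro hm
  rcases List.mem_cons.mp hm with e | hm2
  · exact (ne_of_idx l hn _ _ (by omega)) e
  · obtain ⟨j, hj, hEq⟩ := List.mem_iff_getElem.mp hm2
    rw [List.length_drop] at hj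
    rw [dropElemN l 2 j (by omega)] at hEq
    exact absurd (hn.getElem_inj_iff.mp hEq) (by omega)

lemma outer (a b : α) (l : List α) (hn : l.Nodup) (hL : 4 ≤ l.length)
    (ha : a ∉ l) (hb : b ∉ l) (hab : a ≠ b) :
    (Equiv.swap a b * l.formPerm) *
      (Equiv.swap b (l[1]'(by omega)) * Equiv.swap b (l[0]'(by omega))) =
    (Equiv.swap a (l[1]'(by omega)) * Equiv.swap a b) *
      ((l[0]'(by omega)) :: l.drop 2).formPerm := by
  set l' : List α := (l[0]'(by omega)) :: l.drop 2 with hl'def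
  have hlen' : l'.length = l.length - 1 := by
    rw [hl'def, List.length_cons, List.length_drop]; omega
  have hn' : l'.Nodup := by
    rw [hl'def, List.nodup_cons]
    refine ⟨?_, hn.sublist (List.drop_sublist 2 l)⟩
    intro hm
    obtain ⟨j, hj, hEq⟩ := List.mem_iff_getElem.mp hm
    rw [List.length_drop] at hj
    rw [dropElemN l 2 j (by omega)] at hEq
    exact absurd (hn.getElem_inj_iff.mp hEq) (by omega)
  have hl'sub : ∀ y : α, y ∈ l' → y ∈ l := by
    intro y hy
    rcases List.mem_cons.mp hy with e | hm2
    · exact e ▸ List.getElem_mem _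
    · exact List.drop_subset 2 l hm2
  have hl'succ : ∀ (j : ℕ) (hj : 2 + j < l.length),
      l'[j+1]'(by rw [hlen']; omega) = l[2+j]'hj := by
    intro j hj
    exact dropElemN l 2 j hj
  have hfp'0 : l'.formPerm (l[0]'(by omega)) = l[2]'(by omega) := by
    have h0 : l'.formPerm (l'[0]'(by rw [hlen']; omega)) = l'[0+1]'(by rw [hlen']; omega) :=
      List.formPerm_apply_lt_getElem l' hn' 0 (by rw [hlen']; omega)
    exact h0.trans ((hl'succ 0 (by omega)).trans (getElem_idx_eq l _ (by omega)))
  have hfp'mid : ∀ (i : ℕ) (h2 : 2 ≤ i) (hilt : i + 1 < l.length),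
      l'.formPerm (l[i]'(by omega)) = l[i+1]'hilt := by
    intro i h2 hilt
    have e : l[i]'(by omega) = l'[(i-2)+1]'(by rw [hlen']; omega) :=
      ((hl'succ (i-2) (by omega)).trans (getElem_idx_eq l _ (by omega))).symm
    rw [e, List.formPerm_apply_lt_getElem l' hn' _ (by rw [hlen']; omega)]
    exact (getElem_idx_eq l' _ (show i - 2 + 1 + 1 = (i-1)+1 by omega)).trans
      ((hl'succ (i-1) (by omega)).trans (getElem_idx_eq l _ (by omega)))
  have hfp'last : l'.formPerm (l[l.length-1]'(by omega)) = l[0]'(by omega) := by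
    have e : l[l.length-1]'(by omega) = l'[(l.length-3)+1]'(by rw [hlen']; omega) :=
      ((hl'succ (l.length-3) (by omega)).trans (getElem_idx_eq l _ (by omega))).symm
    rw [e, List.formPerm_apply_getElem l' hn' _ (by rw [hlen']; omega)]
    rw [getElem_idx_eq l' _ (show ((l.length-3+1)+1) % l'.length = 0 by
      rw [hlen', show l.length-3+1+1 = l.length-1 by omega]; exact Nat.mod_self _)]
    rfl
  suffices h : ∀ x, Equiv.swap a b (l.formPerm
      ((Equiv.swap b (l[1]'(by omega)) * Equiv.swap b (l[0]'(by omega))) x)) =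
      (Equiv.swap a (l[1]'(by omega)) * Equiv.swap a b) (l'.formPerm x) by
    ext x; exact h x
  intro x
  have hane : ∀ (i : ℕ) (hi : i < l.length), a ≠ l[i]'hi :=
    fun i hi e => ha (e ▸ List.getElem_mem _)
  have hbne : ∀ (i : ℕ) (hi : i < l.length), b ≠ l[i]'hi :=
    fun i hi e => hb (e ▸ List.getElem_mem _)
  by_cases hxa : x = a
  · rw [hxa]
    rw [sw3_fix _ _ _ _ hab (hane 1 (by omega)) (hane 0 (by omega)),
      List.formPerm_apply_of_notMem ha, Equiv.swap_apply_left,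
      List.formPerm_apply_of_notMem (fun hm => ha (hl'sub a hm)),
      sw3_a _ _ _ (Ne.symm hab) (hbne 1 (by omega))]
  by_cases hxb : x = b
  · rw [hxb]
    rw [sw3_a _ _ _ (Ne.symm (hbne 0 (by omega)))
        (ne_of_idx l hn _ _ (by omega)),
      List.formPerm_apply_lt_getElem l hn 0 (by omega),
      Equiv.swap_apply_of_ne_of_ne (Ne.symm (hane 1 (by omega))) (Ne.symm (hbne 1 (by omega))),
      List.formPerm_apply_of_notMem (fun hm => hb (hl'sub b hm)), sw3_b]
  by_cases hx : x ∈ l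
  · obtain ⟨i, hi, rfl⟩ := List.mem_iff_getElem.mp hx
    by_cases hi0 : i = 0
    · subst hi0
      rw [sw3_b, List.formPerm_apply_lt_getElem l hn 1 (by omega),
        Equiv.swap_apply_of_ne_of_ne (Ne.symm (hane 2 (by omega))) (Ne.symm (hbne 2 (by omega))),
        hfp'0, sw3_fix _ _ _ _ (Ne.symm (hane 2 (by omega))) (ne_of_idx l hn _ _ (by omega))
          (Ne.symm (hbne 2 (by omega)))]
    by_cases hi1 : i = 1
    · subst hi1
      rw [sw3_c _ _ _ (Ne.symm (hbne 1 (by omega))) (ne_of_idx l hn _ _ (by omega)),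
        List.formPerm_apply_of_notMem hb, Equiv.swap_apply_right,
        List.formPerm_apply_of_notMem (not_mem_l' l hn hL _ rfl),
        sw3_c _ _ _ (Ne.symm (hane 1 (by omega))) (Ne.symm (hbne 1 (by omega)))]
    by_cases hiL : i = l.length - 1
    · subst hiL
      rw [sw3_fix _ _ _ _ (Ne.symm (hbne _ _)) (ne_of_idx l hn _ _ (by omega))
          (ne_of_idx l hn _ _ (by omega)),
        List.formPerm_apply_getElem l hn _ (by omega),
        getElem_idx_eq l _ (show (l.length - 1 + 1) % l.length = 0 by
          rw [Nat.sub_add_cancel (by omega : 1 ≤ l.length)]; exact Nat.mod_self _),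
        Equiv.swap_apply_of_ne_of_ne (Ne.symm (hane 0 (by omega))) (Ne.symm (hbne 0 (by omega))),
        hfp'last, sw3_fix _ _ _ _ (Ne.symm (hane 0 (by omega)))
          (ne_of_idx l hn _ _ (by omega)) (Ne.symm (hbne 0 (by omega)))]
    · have h2i : 2 ≤ i := by omega
      rw [sw3_fix _ _ _ _ (Ne.symm (hbne _ _)) (ne_of_idx l hn _ _ (by omega))
          (ne_of_idx l hn _ _ (by omega)),
        List.formPerm_apply_lt_getElem l hn i (by omega),
        Equiv.swap_apply_of_ne_of_ne (Ne.symm (hane (i+1) (by omega)))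
          (Ne.symm (hbne (i+1) (by omega))),
        hfp'mid i h2i (by omega),
        sw3_fix _ _ _ _ (Ne.symm (hane (i+1) (by omega))) (ne_of_idx l hn _ _ (by omega))
          (Ne.symm (hbne (i+1) (by omega)))]
  · have hx0 : x ≠ l[0]'(by omega) := fun e => hx (e ▸ List.getElem_mem _)
    have hx1 : x ≠ l[1]'(by omega) := fun e => hx (e ▸ List.getElem_mem _)
    rw [sw3_fix _ _ _ _ hxb hx1 hx0, List.formPerm_apply_of_notMem hx,
      Equiv.swap_apply_of_ne_of_ne hxa hxb,
      List.formPerm_apply_of_notMem (fun hm => hx (hl'sub x hm)),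
      sw3_fix _ _ _ _ hxa hx1 hxb]


end Stmt7Aux

/-- If `u` is a product of a transposition and a disjoint cycle of even length (≥ 4),
then there exists `h` with `h^3 = 1` and `(uh)^3 = 1`. -/
theorem stmt7 {n : ℕ} (u σ₁ σ₂ : Equiv.Perm (Fin n)) (hu : u = σ₁ * σ₂)
    (h1 : σ₁.IsSwap) (h2 : σ₂.IsCycle) (h2even : Even σ₂.support.card)
    (h2len : 4 ≤ σ₂.support.card) (hdisj : σ₁.Disjoint σ₂) :
    ∃ h : Equiv.Perm (Fin n), h ^ 3 = 1 ∧ (u * h) ^ 3 = 1 := by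
  classical
  obtain ⟨a, b, hab, hσ₁⟩ := h1
  obtain ⟨c, hc⟩ := Finset.card_pos.mp (show 0 < σ₂.support.card by omega)
  have hc' : σ₂ c ≠ c := Equiv.Perm.mem_support.mp hc
  set l : List (Fin n) := σ₂.toList c with hldef
  have hfp : l.formPerm = σ₂ := by
    rw [hldef, Equiv.Perm.formPerm_toList, h2.cycleOf_eq hc']
  have hnl : l.Nodup := Equiv.Perm.nodup_toList σ₂ c
  have hlenl : l.length = σ₂.support.card := by
    rw [hldef, Equiv.Perm.length_toList, h2.cycleOf_eq hc']
  have hL4 : 4 ≤ l.length := by rw [hlenl]; exact h2len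
  have hmemne : ∀ x ∈ l, σ₂ x ≠ x := by
    intro x hx
    obtain ⟨i, hi, rfl⟩ := List.mem_iff_getElem.mp hx
    rw [← hfp]
    exact Stmt7Aux.formPerm_ne_self l hnl (by omega) hi
  have haσ : σ₂ a = a := by
    rcases hdisj a with h | h
    · rw [hσ₁, Equiv.swap_apply_left] at h; exact absurd h.symm hab
    · exact h
  have hbσ : σ₂ b = b := by
    rcases hdisj b with h | h
    · rw [hσ₁, Equiv.swap_apply_right] at h; exact absurd h hab
    · exact h
  have ha : a ∉ l := fun hm => hmemne a hm haσ
  have hb : b ∉ l := fun hm => hmemne b hm hbσ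
  have hane : ∀ (i : ℕ) (hi : i < l.length), a ≠ l[i]'hi :=
    fun i hi e => ha (e ▸ List.getElem_mem _)
  have hbne : ∀ (i : ℕ) (hi : i < l.length), b ≠ l[i]'hi :=
    fun i hi e => hb (e ▸ List.getElem_mem _)
  set l' : List (Fin n) := (l[0]'(by omega)) :: l.drop 2 with hl'def
  have hlen' : l'.length = l.length - 1 := by
    rw [hl'def, List.length_cons, List.length_drop]; omega
  have hn' : l'.Nodup := by
    rw [hl'def, List.nodup_cons]
    refine ⟨?_, hnl.sublist (List.drop_sublist 2 l)⟩
    intro hm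
    obtain ⟨j, hj, hEq⟩ := List.mem_iff_getElem.mp hm
    rw [List.length_drop] at hj
    rw [Stmt7Aux.dropElemN l 2 j (by omega)] at hEq
    exact absurd (hnl.getElem_inj_iff.mp hEq) (by omega)
  have hl'sub : ∀ y : Fin n, y ∈ l' → y ∈ l := by
    intro y hy
    rcases List.mem_cons.mp hy with e | hm2
    · exact e ▸ List.getElem_mem _
    · exact List.drop_subset 2 l hm2
  have hodd : Odd l'.length := by
    rw [hlen', hlenl]
    obtain ⟨m, hm⟩ := h2even
    exact ⟨m - 1, by omega⟩
  obtain ⟨k, hk3, hfk3, hkmoves⟩ := Stmt7Aux.key l'.length hodd l' hn' rfl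
    (l[0]'(by omega)) List.mem_cons_self
  have hkdrop : ∀ x : Fin n, k x ≠ x → x ∈ l.drop 2 := by
    intro x hkx
    obtain ⟨hm, hne0⟩ := hkmoves x hkx
    rcases List.mem_cons.mp hm with e | hm2
    · exact absurd e hne0
    · exact hm2
  refine ⟨(Equiv.swap b (l[1]'(by omega)) * Equiv.swap b (l[0]'(by omega))) * k, ?_, ?_⟩
  · apply Stmt7Aux.mul_cube
    · intro x
      by_cases hk : k x = x
      · exact Or.inr hk
      · left
        obtain ⟨j, hj, rfl⟩ := List.mem_iff_getElem.mp (hkdrop x hk)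
        rw [List.length_drop] at hj
        rw [Stmt7Aux.dropElemN l 2 j (by omega)]
        exact Stmt7Aux.sw3_fix _ _ _ _ (Ne.symm (hbne _ _))
          (Stmt7Aux.ne_of_idx l hnl _ _ (by omega))
          (Stmt7Aux.ne_of_idx l hnl _ _ (by omega))
    · exact Stmt7Aux.sw3_cube _ _ _ (hbne 1 (by omega)) (hbne 0 (by omega))
        (Stmt7Aux.ne_of_idx l hnl _ _ (by omega))
    · exact hk3
  · have hu' : u = Equiv.swap a b * l.formPerm := by rw [hu, hσ₁, hfp]
    rw [hu']
    have assoc : (Equiv.swap a b * l.formPerm) *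
        ((Equiv.swap b (l[1]'(by omega)) * Equiv.swap b (l[0]'(by omega))) * k) =
        (Equiv.swap a (l[1]'(by omega)) * Equiv.swap a b) * (l'.formPerm * k) := by
      rw [← mul_assoc, Stmt7Aux.outer a b l hnl hL4 ha hb hab, mul_assoc]
    rw [assoc]
    apply Stmt7Aux.mul_cube
    · intro x
      by_cases hw : (l'.formPerm * k) x = x
      · exact Or.inr hw
      · left
        have hxl' : x ∈ l' := by
          by_cases hk : k x = x
          · exact Stmt7Aux.moves_mem l' x
              (fun hfix => hw (by rw [Equiv.Perm.mul_apply, hk, hfix]))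
          · exact (hkmoves x hk).1
        have hxl : x ∈ l := hl'sub x hxl'
        refine Stmt7Aux.sw3_fix _ _ _ _ (fun e => ha (e ▸ hxl)) ?_ (fun e => hb (e ▸ hxl))
        exact fun e => Stmt7Aux.not_mem_l' l hnl hL4 (by omega) rfl (e ▸ hxl')
    · exact Stmt7Aux.sw3_cube _ _ _ (hane 1 (by omega)) hab
        (Ne.symm (hbne 1 (by omega)))
    · exact hfk3
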